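/- arXiv:1706.03755 — 2 statements merged into one kernel-verified Lean document; each statement's English description precedes it below -/
import Mathlib

section
/- For x ≥ 16, ∑_{log⁴x < p ≤ x/2} (log p)/(p · log(x/p)) = O(log log x), where the sum is over primes p. -/
open Finset MeasureTheory
open scoped Classical BigOperators

/-- The primes `p ≤ y`. -/
noncomputable def primesUpTo (y : ℝ) : Finset ℕ :=
  (Finset.Icc 1 ⌊y⌋₊).filter Nat.Prime

/-- The truncated Euler product `F_x(s) = ∏_{p ≤ x} (1 + ∑_{k ≥ 1} f(p^k) p^{-ks})`. -/
noncomputable def Fx (f : ℕ → ℂ) (x : ℝ) (s : ℂ) : ℂ :=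
  ∏ p ∈ primesUpTo x, (1 + ∑' k : ℕ, f (p ^ (k + 1)) / (p : ℂ) ^ (((k : ℂ) + 1) * s))

/-- `L(x)² = ∑_{|N| ≤ (log x)² + 1} (N²+1)⁻¹ sup_{|t-N| ≤ 1/2} |F_x(1+it)|²`. -/
noncomputable def Lsq (f : ℕ → ℂ) (x : ℝ) : ℝ :=
  ∑ N ∈ Finset.Icc (-⌊(Real.log x) ^ 2 + 1⌋) ⌊(Real.log x) ^ 2 + 1⌋,
    (1 / ((N : ℝ) ^ 2 + 1)) *
      sSup ((fun t : ℝ => ‖Fx f x (1 + t * Complex.I)‖ ^ 2) ''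
        Set.Icc ((N : ℝ) - 1 / 2) ((N : ℝ) + 1 / 2))

/-- The set `P_k` of primes `p` with `(log x)^4 < p ≤ x/2` and
`x^{1-e^{1-k}} < p ≤ x^{1-e^{-k}}`. -/
noncomputable def Pk (x : ℝ) (k : ℕ) : Finset ℕ :=
  (Finset.Icc 1 ⌊x⌋₊).filter (fun p : ℕ => p.Prime ∧ (Real.log x) ^ 4 < (p : ℝ) ∧
    (p : ℝ) ≤ x / 2 ∧ x ^ (1 - Real.exp (1 - (k : ℝ))) < (p : ℝ) ∧
    (p : ℝ) ≤ x ^ (1 - Real.exp (-(k : ℝ))))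

/-- The triple convolution sum `S_k(x)`. -/
noncomputable def Sk (f : ℕ → ℂ) (x : ℝ) (k : ℕ) : ℂ :=
  ∑ p ∈ Pk x k, ∑ q ∈ primesUpTo (x / p), ∑ n ∈ Finset.Icc 1 ⌊x / (p * q)⌋₊,
    (f p * (Real.log p : ℂ) / (Real.log (x / p) : ℂ)) * f n * f q * (Real.log q : ℂ)

private lemma cheby (n : ℕ) :
    ∑ p ∈ (Finset.range (n+1)).filter Nat.Prime, Real.log p ≤ n * Real.log 4 := by
  have h0 : (0:ℝ) < (primorial n : ℝ) := by exact_mod_cast primorial_pos n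
  have h1 : Real.log (primorial n : ℝ) ≤ Real.log ((4:ℝ)^n) := by
    apply Real.log_le_log h0
    exact_mod_cast primorial_le_4_pow n
  rw [Real.log_pow] at h1
  have h2 : Real.log (primorial n : ℝ)
      = ∑ p ∈ (Finset.range (n+1)).filter Nat.Prime, Real.log p := by
    rw [primorial, Nat.cast_prod, Real.log_prod]
    intro p hp
    have := (Finset.mem_filter.mp hp).2.pos
    positivity
  rw [h2] at h1
  exact h1

private lemma harm (J : ℕ) : ∑ j ∈ Finset.Icc 1 J, (1:ℝ)/j ≤ 1 + Real.log J := by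
  have h : ∑ j ∈ Finset.Icc 1 J, (1:ℝ)/j = ((harmonic J : ℚ) : ℝ) := by
    rw [harmonic_eq_sum_Icc]
    push_cast
    simp [one_div]
  rw [h]
  exact_mod_cast harmonic_le_one_add_log J

theorem stmt3 :
    ∃ C : ℝ, 0 < C ∧ ∀ x : ℝ, 16 ≤ x →
      ∑ p ∈ (Finset.Icc 1 ⌊x / 2⌋₊).filter
          (fun p : ℕ => p.Prime ∧ (Real.log x) ^ 4 < (p : ℝ)),
        Real.log p / (p * Real.log (x / p)) ≤ C * Real.log (Real.log x) := by
  refine ⟨12, by norm_num, fun x hx => ?_⟩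
  have hx0 : (0:ℝ) < x := by linarith
  have hlog2 : (0:ℝ) < Real.log 2 := Real.log_pos (by norm_num)
  have hlog2' : (0.6931:ℝ) < Real.log 2 := by
    have := Real.log_two_gt_d9; linarith
  have hlogx : (2.772:ℝ) < Real.log x := by
    have h16 : Real.log 16 ≤ Real.log x := Real.log_le_log (by norm_num) hx
    have : Real.log 16 = 4 * Real.log 2 := by
      rw [show (16:ℝ) = 2^4 by norm_num, Real.log_pow]; norm_num
    nlinarith
  have hllx : (1:ℝ) ≤ Real.log (Real.log x) := by
    rw [Real.le_log_iff_exp_le (by linarith)]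
    have := Real.exp_one_lt_d9
    linarith
  set A := (Finset.Icc 1 ⌊x / 2⌋₊).filter
      (fun p : ℕ => p.Prime ∧ (Real.log x) ^ 4 < (p : ℝ)) with hA
  set J := ⌊Real.logb 2 x⌋₊ with hJdef
  set g : ℕ → ℕ := fun p => ⌊Real.logb 2 (x / p)⌋₊ with hg
  have hAfact : ∀ p ∈ A, p.Prime ∧ (2:ℝ) ≤ (p:ℝ) ∧ (p:ℝ) ≤ x/2 := by
    intro p hp
    rw [hA, Finset.mem_filter, Finset.mem_Icc] at hp
    refine ⟨hp.2.1, by exact_mod_cast hp.2.1.two_le, ?_⟩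
    have h2 : (p:ℝ) ≤ (⌊x/2⌋₊ : ℝ) := by exact_mod_cast hp.1.2
    calc (p:ℝ) ≤ (⌊x/2⌋₊ : ℝ) := h2
      _ ≤ x/2 := Nat.floor_le (by linarith)
  have hmaps : ∀ p ∈ A, g p ∈ Finset.Icc 1 J := by
    intro p hp
    obtain ⟨hprime, hp2, hpx⟩ := hAfact p hp
    have hp0 : (0:ℝ) < (p:ℝ) := by linarith
    have hxp2 : (2:ℝ) ≤ x / p := by
      rw [le_div_iff₀ hp0]; linarith
    have hxp0 : (0:ℝ) < x / p := by linarith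
    rw [Finset.mem_Icc]
    constructor
    · apply Nat.le_floor
      rw [Nat.cast_one, Real.le_logb_iff_rpow_le (by norm_num) hxp0]
      simpa using hxp2
    · apply Nat.floor_mono
      apply Real.logb_le_logb_of_le (by norm_num : (1:ℝ) < 2) hxp0
      rw [div_le_iff₀ hp0]
      nlinarith
  rw [← Finset.sum_fiberwise_of_maps_to hmaps]
  have hfiber : ∀ j ∈ Finset.Icc 1 J,
      ∑ p ∈ A.filter (fun p => g p = j), Real.log p / (p * Real.log (x / p))
        ≤ 4 / (j:ℝ) := by
    intro j hj
    rw [Finset.mem_Icc] at hj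
    have hj1 : (1:ℝ) ≤ (j:ℝ) := by exact_mod_cast hj.1
    set c : ℝ := (x / 2^(j+1)) * ((j:ℝ) * Real.log 2) with hc
    have hc0 : 0 < c := by
      apply mul_pos (by positivity) (by positivity)
    have key : ∀ p ∈ A.filter (fun p => g p = j),
        (x / 2^(j+1) < (p:ℝ)) ∧ ((p:ℝ) ≤ x / 2^j) ∧
        ((j:ℝ) * Real.log 2 ≤ Real.log (x / p)) := by
      intro p hp
      rw [Finset.mem_filter] at hp
      obtain ⟨hprime, hp2, hpx⟩ := hAfact p hp.1
      have hp0 : (0:ℝ) < (p:ℝ) := by linarith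
      have hxp0 : (0:ℝ) < x / p := by positivity
      have hfl := hp.2
      have hnn : 0 ≤ Real.logb 2 (x / p) := by
        apply Real.logb_nonneg (by norm_num)
        rw [le_div_iff₀ hp0]; linarith
      rw [hg] at hfl
      simp only [Nat.floor_eq_iff hnn] at hfl
      have h1 : (j:ℝ) * Real.log 2 ≤ Real.log (x/p) := by
        have := hfl.1
        rw [Real.logb, le_div_iff₀ hlog2] at this
        linarith
      have h2 : Real.log (x/p) < ((j:ℝ) + 1) * Real.log 2 := by
        have := hfl.2
        rw [Real.logb, div_lt_iff₀ hlog2] at this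
        push_cast at this ⊢
        linarith
      have hub : x / p < 2^(j+1) := by
        have hh : Real.log (x/p) < Real.log ((2:ℝ)^(j+1)) := by
          rw [Real.log_pow]; push_cast; linarith
        have := (Real.log_lt_log_iff hxp0 (by positivity)).mp hh
        exact this
      have hlb2 : (2:ℝ)^j ≤ x / p := by
        have hh : Real.log ((2:ℝ)^j) ≤ Real.log (x/p) := by
          rw [Real.log_pow]; linarith
        exact (Real.log_le_log_iff (by positivity) hxp0).mp hh
      refine ⟨?_, ?_, h1⟩
      · rw [div_lt_iff₀ (by positivity : (0:ℝ) < (2:ℝ)^(j+1))]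
        rw [div_lt_iff₀ hp0] at hub
        linarith
      · rw [le_div_iff₀ (by positivity : (0:ℝ) < (2:ℝ)^j)]
        rw [le_div_iff₀ hp0] at hlb2
        linarith
    set n := ⌊x / 2^j⌋₊ with hn
    have hsub : A.filter (fun p => g p = j) ⊆ (Finset.range (n+1)).filter Nat.Prime := by
      intro p hp
      obtain ⟨_, hple, _⟩ := key p hp
      rw [Finset.mem_filter] at hp ⊢
      refine ⟨?_, (hAfact p hp.1).1⟩
      rw [Finset.mem_range, Nat.lt_succ_iff]
      exact Nat.le_floor hple
    calc ∑ p ∈ A.filter (fun p => g p = j), Real.log p / (p * Real.log (x / p))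
        ≤ ∑ p ∈ A.filter (fun p => g p = j), Real.log p / c := by
          apply Finset.sum_le_sum
          intro p hp
          obtain ⟨hlow, hhigh, hlb⟩ := key p hp
          have hp2 : (2:ℝ) ≤ (p:ℝ) := (hAfact p (Finset.mem_filter.mp hp).1).2.1
          have hlogp : 0 ≤ Real.log p := Real.log_nonneg (by linarith)
          apply div_le_div_of_nonneg_left hlogp hc0
          rw [hc]
          apply mul_le_mul hlow.le hlb (by positivity) (by linarith)
      _ = (∑ p ∈ A.filter (fun p => g p = j), Real.log p) / c := by
          rw [Finset.sum_div]
      _ ≤ ((n:ℝ) * Real.log 4) / c := by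
          apply div_le_div_of_nonneg_right ?_ hc0.le
          calc ∑ p ∈ A.filter (fun p => g p = j), Real.log p
              ≤ ∑ p ∈ (Finset.range (n+1)).filter Nat.Prime, Real.log p := by
                apply Finset.sum_le_sum_of_subset_of_nonneg hsub
                intro p hp _
                have := (Finset.mem_filter.mp hp).2.two_le
                exact Real.log_nonneg (by exact_mod_cast Nat.one_le_iff_ne_zero.mpr (by omega))
            _ ≤ (n:ℝ) * Real.log 4 := cheby n
      _ ≤ ((x / 2^j) * Real.log 4) / c := by
          apply div_le_div_of_nonneg_right ?_ hc0.le
          have h4 : (0:ℝ) ≤ Real.log 4 := Real.log_nonneg (by norm_num)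
          apply mul_le_mul_of_nonneg_right (Nat.floor_le (by positivity)) h4
      _ = 4 / (j:ℝ) := by
          have hl4 : Real.log 4 = 2 * Real.log 2 := by
            rw [show (4:ℝ) = 2^2 by norm_num, Real.log_pow]; norm_num
          have hj0 : (j:ℝ) ≠ 0 := by linarith
          rw [hc, hl4, pow_succ]
          field_simp
          ring
  calc ∑ j ∈ Finset.Icc 1 J, ∑ p ∈ A.filter (fun p => g p = j),
          Real.log p / (p * Real.log (x / p))
      ≤ ∑ j ∈ Finset.Icc 1 J, 4 / (j:ℝ) := Finset.sum_le_sum hfiber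
    _ = 4 * ∑ j ∈ Finset.Icc 1 J, 1 / (j:ℝ) := by
        rw [Finset.mul_sum]
        exact Finset.sum_congr rfl fun j _ => by ring
    _ ≤ 4 * (1 + Real.log J) := by
        have := harm J
        linarith
    _ ≤ 12 * Real.log (Real.log x) := by
        have hlogJ : Real.log J ≤ 2 * Real.log (Real.log x) := by
          rcases Nat.eq_zero_or_pos J with h0 | hpos
          · rw [h0]; simp; linarith
          · have hJ1 : (1:ℝ) ≤ (J:ℝ) := by exact_mod_cast hpos
            have hJle : (J:ℝ) ≤ (Real.log x)^2 := by
              have h1 : (J:ℝ) ≤ Real.logb 2 x :=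
                Nat.floor_le (Real.logb_nonneg (by norm_num) (by linarith))
              have h2 : Real.logb 2 x ≤ (Real.log x)^2 := by
                rw [Real.logb, div_le_iff₀ hlog2]
                nlinarith
              linarith
            calc Real.log J ≤ Real.log ((Real.log x)^2) :=
                  Real.log_le_log (by linarith) hJle
              _ = 2 * Real.log (Real.log x) := by
                  rw [show (Real.log x)^2 = (Real.log x)^(2:ℕ) by norm_num,
                    Real.log_pow]; norm_num
        linarith
end

section
/- Uniformly for all complex sequences (a_p) indexed by primes and all x ≥ 3, ∫_{-1}^{1} |∑_{(log x)^4 ≤ p ≤ x} a_p (log p) p^{-1-it}|² dt ≪ ∑_{(log x)^4 ≤ p ≤ x} |a_p|² (log p)/p, with an absolute implied constant. -/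
open Finset MeasureTheory
open scoped Classical BigOperators

/-- Chebyshev: sum of log p over primes up to n is at most n log 4. -/
lemma theta_le (n : ℕ) :
    ∑ q ∈ (Finset.range (n+1)).filter Nat.Prime, Real.log q ≤ n * Real.log 4 := by
  have h0 : ∀ q ∈ (Finset.range (n+1)).filter Nat.Prime, ((q:ℝ)) ≠ 0 := by
    intro q hq
    simp only [mem_filter] at hq
    exact_mod_cast hq.2.pos.ne'
  have h1 : Real.log (primorial n) = ∑ q ∈ (Finset.range (n+1)).filter Nat.Prime, Real.log q := by
    rw [primorial]
    push_cast
    exact Real.log_prod h0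
  have h2 : Real.log (primorial n) ≤ Real.log (4 ^ n) := by
    apply Real.log_le_log (by exact_mod_cast primorial_pos n)
    exact_mod_cast primorial_le_4_pow n
  rw [h1] at h2
  rwa [Real.log_pow] at h2

/-- Abel summation with Chebyshev: for antitone nonneg g,
sum of g(q) log q over primes is at most log 4 times sum of g. -/
lemma abel_theta (g : ℕ → ℝ) (hmono : ∀ j, g (j+1) ≤ g j) (h0 : ∀ j, 0 ≤ g j) (N : ℕ) :
    ∑ q ∈ (Finset.range (N+1)).filter Nat.Prime, g q * Real.log q
      ≤ Real.log 4 * ∑ j ∈ Finset.range (N+1), g j := by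
  have key : ∀ n : ℕ,
      ∑ q ∈ (Finset.range (n+1)).filter Nat.Prime, g q * Real.log q
        + g n * (n * Real.log 4 - ∑ q ∈ (Finset.range (n+1)).filter Nat.Prime, Real.log q)
      ≤ Real.log 4 * ∑ j ∈ Finset.range (n+1), g j := by
    intro n
    induction n with
    | zero =>
      have h : ((Finset.range (0+1)).filter Nat.Prime) = (∅ : Finset ℕ) := by decide
      rw [h]
      simp only [Finset.sum_empty, Nat.cast_zero, zero_mul, zero_sub, neg_zero, mul_zero,
        zero_add, Finset.range_one, Finset.sum_singleton, sub_zero]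
      have := h0 0
      have hl4 : (0:ℝ) ≤ Real.log 4 := Real.log_nonneg (by norm_num)
      nlinarith
    | succ n ih =>
      have hins : (Finset.range (n+1+1)) = insert (n+1) (Finset.range (n+1)) := by
        rw [Finset.range_add_one]
      have hθ : (n:ℝ) * Real.log 4 - ∑ q ∈ (Finset.range (n+1)).filter Nat.Prime, Real.log q ≥ 0 :=
        sub_nonneg.mpr (theta_le n)
      by_cases hp : Nat.Prime (n+1)
      · have hf : ((Finset.range (n+1+1)).filter Nat.Prime)
            = insert (n+1) ((Finset.range (n+1)).filter Nat.Prime) := by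
          rw [hins, Finset.filter_insert, if_pos hp]
        have hnm : (n+1) ∉ (Finset.range (n+1)).filter Nat.Prime := by
          simp [Finset.mem_filter]
        rw [hf, Finset.sum_insert hnm, Finset.sum_insert hnm, hins,
          Finset.sum_insert (by simp)]
        push_cast
        have hg := hmono n
        nlinarith [h0 (n+1), h0 n]
      · have hf : ((Finset.range (n+1+1)).filter Nat.Prime)
            = (Finset.range (n+1)).filter Nat.Prime := by
          rw [hins, Finset.filter_insert, if_neg hp]
        rw [hf, hins, Finset.sum_insert (by simp)]
        push_cast
        have hg := hmono n
        have hl4 : (0:ℝ) ≤ Real.log 4 := Real.log_nonneg (by norm_num)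
        nlinarith [h0 (n+1), h0 n]
  have := key N
  have hgN : 0 ≤ g N * ((N:ℝ) * Real.log 4 - ∑ q ∈ (Finset.range (N+1)).filter Nat.Prime, Real.log q) :=
    mul_nonneg (h0 N) (sub_nonneg.mpr (theta_le N))
  linarith

lemma sum_inv_sq_tail (p : ℕ) (hp : 1 ≤ p) (N : ℕ) :
    ∑ j ∈ Finset.Icc (p+1) N, (1:ℝ)/(j:ℝ)^2 ≤ 1/p := by
  have hp' : (0:ℝ) < p := by exact_mod_cast hp
  have key : ∀ M, p ≤ M → ∑ j ∈ Finset.Icc (p+1) M, (1:ℝ)/(j:ℝ)^2 ≤ 1/p - 1/M := by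
    intro M hM
    induction M, hM using Nat.le_induction with
    | base =>
      rw [Finset.Icc_eq_empty (by omega)]
      simp
    | succ M hM ih =>
      rw [Finset.sum_Icc_succ_top (by omega)]
      have hM1 : (1:ℝ) ≤ (M:ℝ) := by exact_mod_cast hp.trans hM
      have h1 : (1:ℝ)/((M:ℝ)+1)^2 ≤ 1/(M:ℝ) - 1/((M:ℝ)+1) := by
        rw [div_sub_div _ _ (by linarith) (by linarith), div_le_div_iff₀ (by positivity) (by positivity)]
        nlinarith
      push_cast
      linarith
  rcases le_or_gt N p with h | h
  · rw [Finset.Icc_eq_empty (by omega)]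
    simpa using (by positivity : (0:ℝ) ≤ 1/(p:ℝ))
  · have hN : (0:ℝ) < (N:ℝ) := by exact_mod_cast (show 0 < N by omega)
    have := key N h.le
    have : (1:ℝ)/(N:ℝ) ≥ 0 := by positivity
    linarith [key N h.le]

lemma sum_g_le (p N : ℕ) (hp : 1 ≤ p) :
    ∑ j ∈ Finset.range (N+1), ((p:ℝ)/(max j p))^2 ≤ 3 * p := by
  have hp' : (0:ℝ) < p := by exact_mod_cast hp
  rw [← Finset.sum_filter_add_sum_filter_not (Finset.range (N+1)) (fun j => j ≤ p)]
  have h1 : ∑ j ∈ (Finset.range (N+1)).filter (fun j => j ≤ p), ((p:ℝ)/(max j p))^2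
      ≤ 2 * p := by
    have he : ∀ j ∈ (Finset.range (N+1)).filter (fun j => j ≤ p), ((p:ℝ)/(max j p))^2 = 1 := by
      intro j hj
      simp only [Finset.mem_filter] at hj
      rw [max_eq_right hj.2, div_self hp'.ne']
      norm_num
    rw [Finset.sum_congr rfl he, Finset.sum_const, nsmul_eq_mul, mul_one]
    have hcard : ((Finset.range (N+1)).filter (fun j => j ≤ p)).card ≤ p + 1 := by
      have hsub : (Finset.range (N+1)).filter (fun j => j ≤ p) ⊆ Finset.range (p+1) := by
        intro j hj
        simp only [Finset.mem_filter, Finset.mem_range] at hj ⊢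
        omega
      simpa using Finset.card_le_card hsub
    have : (((Finset.range (N+1)).filter (fun j => j ≤ p)).card : ℝ) ≤ (p:ℝ) + 1 := by
      exact_mod_cast hcard
    have hp1 : (1:ℝ) ≤ p := by exact_mod_cast hp
    linarith
  have h2 : ∑ j ∈ (Finset.range (N+1)).filter (fun j => ¬ j ≤ p), ((p:ℝ)/(max j p))^2
      ≤ p := by
    have he : ∀ j ∈ (Finset.range (N+1)).filter (fun j => ¬ j ≤ p), ((p:ℝ)/(max j p))^2
        = (p:ℝ)^2 * ((1:ℝ)/(j:ℝ)^2) := by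
      intro j hj
      simp only [Finset.mem_filter, not_le] at hj
      rw [max_eq_left (le_of_lt hj.2)]
      have hj' : (0:ℝ) < j := by exact_mod_cast (show 0 < j by omega)
      field_simp
    rw [Finset.sum_congr rfl he, ← Finset.mul_sum]
    have hsub : (Finset.range (N+1)).filter (fun j => ¬ j ≤ p) ⊆ Finset.Icc (p+1) N := by
      intro j hj
      simp only [Finset.mem_filter, Finset.mem_range, not_le, Finset.mem_Icc] at hj ⊢
      omega
    have hsum : ∑ j ∈ (Finset.range (N+1)).filter (fun j => ¬ j ≤ p), (1:ℝ)/(j:ℝ)^2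
        ≤ ∑ j ∈ Finset.Icc (p+1) N, (1:ℝ)/(j:ℝ)^2 :=
      Finset.sum_le_sum_of_subset_of_nonneg hsub (fun j _ _ => by positivity)
    calc (p:ℝ)^2 * ∑ j ∈ (Finset.range (N+1)).filter (fun j => ¬ j ≤ p), (1:ℝ)/(j:ℝ)^2
        ≤ (p:ℝ)^2 * ((1:ℝ)/(p:ℝ)) := by
          apply mul_le_mul_of_nonneg_left (hsum.trans (sum_inv_sq_tail p hp N)) (by positivity)
      _ = (p:ℝ) := by field_simp
  linarith

-- per-term bound, case q ≤ p
lemma term_le (p q : ℕ) (hp : 2 ≤ p) (hq : 2 ≤ q) (hqp : q ≤ p) :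
    Real.exp (-(Real.log q - Real.log p)^2/2)
      * (Real.sqrt ((p:ℝ)/Real.log p) / Real.sqrt ((q:ℝ)/Real.log q))
    ≤ Real.exp (25/8) * ((q:ℝ)/p)^2 := by
  have hp0 : (0:ℝ) < p := by exact_mod_cast (by omega : 0 < p)
  have hq0 : (0:ℝ) < q := by exact_mod_cast (by omega : 0 < q)
  have hlp : 0 < Real.log p := Real.log_pos (by exact_mod_cast (by omega : 1 < p))
  have hlq : 0 < Real.log q := Real.log_pos (by exact_mod_cast (by omega : 1 < q))
  have hlqp : Real.log q ≤ Real.log p := Real.log_le_log hq0 (by exact_mod_cast hqp)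
  set u := Real.log q - Real.log p with hu
  set T := Real.exp (-u^2/2) * (Real.sqrt ((p:ℝ)/Real.log p) / Real.sqrt ((q:ℝ)/Real.log q)) with hT
  have hT0 : 0 ≤ T := by positivity
  have hTsq : T^2 = Real.exp (-u^2) * (((p:ℝ) * Real.log q)/((q:ℝ) * Real.log p)) := by
    rw [hT, mul_pow, div_pow, Real.sq_sqrt (by positivity), Real.sq_sqrt (by positivity),
      sq, ← Real.exp_add]
    have he : -u^2/2 + -u^2/2 = -u^2 := by ring
    rw [he]
    congr 1
    field_simp
  have hexp : Real.exp (-u^2) ≤ Real.exp (25/4) * ((q:ℝ)/p)^5 := by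
    have hqp' : ((q:ℝ)/p) = Real.exp u := by
      rw [hu, Real.exp_sub, Real.exp_log hq0, Real.exp_log hp0]
    rw [hqp', ← Real.exp_nat_mul, ← Real.exp_add, Real.exp_le_exp]
    nlinarith [sq_nonneg (u + 5/2)]
  set B := Real.exp (25/8) * ((q:ℝ)/p)^2 with hBdef
  have hB0 : 0 ≤ B := by positivity
  have hBsq : B^2 = Real.exp (25/4) * ((q:ℝ)/p)^4 := by
    rw [hBdef, mul_pow, sq (Real.exp (25/8)), ← Real.exp_add]
    norm_num
    ring
  have hT2B : T^2 ≤ B^2 := by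
    rw [hTsq, hBsq]
    have h1 : Real.exp (-u^2) * (((p:ℝ) * Real.log q)/((q:ℝ) * Real.log p))
        ≤ (Real.exp (25/4) * ((q:ℝ)/p)^5) * (((p:ℝ) * Real.log q)/((q:ℝ) * Real.log p)) :=
      mul_le_mul_of_nonneg_right hexp (by positivity)
    have h2 : (Real.exp (25/4) * ((q:ℝ)/p)^5) * (((p:ℝ) * Real.log q)/((q:ℝ) * Real.log p))
        = (Real.exp (25/4) * ((q:ℝ)/p)^4) * (Real.log q/Real.log p) := by
      field_simp
    have h3 : (Real.exp (25/4) * ((q:ℝ)/p)^4) * (Real.log q/Real.log p)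
        ≤ (Real.exp (25/4) * ((q:ℝ)/p)^4) * 1 :=
      mul_le_mul_of_nonneg_left ((div_le_one hlp).mpr hlqp) (by positivity)
    calc Real.exp (-u^2) * (((p:ℝ) * Real.log q)/((q:ℝ) * Real.log p)) ≤ _ := h1
      _ = _ := h2
      _ ≤ _ := h3
      _ = Real.exp (25/4) * ((q:ℝ)/p)^4 := by ring
  calc T = Real.sqrt (T^2) := (Real.sqrt_sq hT0).symm
    _ ≤ Real.sqrt (B^2) := Real.sqrt_le_sqrt hT2B
    _ = B := Real.sqrt_sq hB0

-- per-term bound, case p ≤ q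
lemma term_ge (p q : ℕ) (hp : 2 ≤ p) (hq : 2 ≤ q) (hpq : p ≤ q) :
    Real.exp (-(Real.log q - Real.log p)^2/2)
      * (Real.sqrt ((p:ℝ)/Real.log p) / Real.sqrt ((q:ℝ)/Real.log q))
    ≤ Real.exp (25/8) * (((p:ℝ)/q)^2 * (Real.log q / Real.log p)) := by
  have hp0 : (0:ℝ) < p := by exact_mod_cast (by omega : 0 < p)
  have hq0 : (0:ℝ) < q := by exact_mod_cast (by omega : 0 < q)
  have hlp : 0 < Real.log p := Real.log_pos (by exact_mod_cast (by omega : 1 < p))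
  have hlq : 0 < Real.log q := Real.log_pos (by exact_mod_cast (by omega : 1 < q))
  have hlpq : Real.log p ≤ Real.log q := Real.log_le_log hp0 (by exact_mod_cast hpq)
  set u := Real.log q - Real.log p with hu
  set T := Real.exp (-u^2/2) * (Real.sqrt ((p:ℝ)/Real.log p) / Real.sqrt ((q:ℝ)/Real.log q)) with hT
  have hT0 : 0 ≤ T := by positivity
  have hTsq : T^2 = Real.exp (-u^2) * (((p:ℝ) * Real.log q)/((q:ℝ) * Real.log p)) := by
    rw [hT, mul_pow, div_pow, Real.sq_sqrt (by positivity), Real.sq_sqrt (by positivity),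
      sq, ← Real.exp_add]
    have he : -u^2/2 + -u^2/2 = -u^2 := by ring
    rw [he]
    congr 1
    field_simp
  have hexp : Real.exp (-u^2) ≤ Real.exp (25/4) * ((p:ℝ)/q)^5 := by
    have hqp' : ((p:ℝ)/q) = Real.exp (-u) := by
      rw [hu, neg_sub, Real.exp_sub, Real.exp_log hq0, Real.exp_log hp0]
    rw [hqp', ← Real.exp_nat_mul, ← Real.exp_add, Real.exp_le_exp]
    push_cast
    nlinarith [sq_nonneg (u - 5/2)]
  set B := Real.exp (25/8) * (((p:ℝ)/q)^2 * (Real.log q / Real.log p)) with hBdef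
  have hB0 : 0 ≤ B := by positivity
  have hBsq : B^2 = (Real.exp (25/4) * ((p:ℝ)/q)^4)
      * ((Real.log q/Real.log p) * (Real.log q/Real.log p)) := by
    rw [hBdef, mul_pow, sq (Real.exp (25/8)), ← Real.exp_add]
    norm_num
    ring
  have hr1 : ((p:ℝ)/q)^2 ≤ 1 := by
    apply pow_le_one₀ (by positivity)
    rw [div_le_one hq0]
    exact_mod_cast hpq
  have hs1 : 1 ≤ Real.log q / Real.log p := (one_le_div hlp).mpr hlpq
  have hT2B : T^2 ≤ B^2 := by
    rw [hTsq, hBsq]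
    have h1 : Real.exp (-u^2) * (((p:ℝ) * Real.log q)/((q:ℝ) * Real.log p))
        ≤ (Real.exp (25/4) * ((p:ℝ)/q)^5) * (((p:ℝ) * Real.log q)/((q:ℝ) * Real.log p)) :=
      mul_le_mul_of_nonneg_right hexp (by positivity)
    have h2 : (Real.exp (25/4) * ((p:ℝ)/q)^5) * (((p:ℝ) * Real.log q)/((q:ℝ) * Real.log p))
        = (Real.exp (25/4) * ((p:ℝ)/q)^4) * (((p:ℝ)/q)^2 * (Real.log q/Real.log p)) := by
      field_simp
    have h3 : (Real.exp (25/4) * ((p:ℝ)/q)^4) * (((p:ℝ)/q)^2 * (Real.log q/Real.log p))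
        ≤ (Real.exp (25/4) * ((p:ℝ)/q)^4)
          * ((Real.log q/Real.log p) * (Real.log q/Real.log p)) := by
      apply mul_le_mul_of_nonneg_left _ (by positivity)
      exact mul_le_mul_of_nonneg_right (hr1.trans hs1) (by positivity)
    calc Real.exp (-u^2) * (((p:ℝ) * Real.log q)/((q:ℝ) * Real.log p)) ≤ _ := h1
      _ = _ := h2
      _ ≤ _ := h3
  calc T = Real.sqrt (T^2) := (Real.sqrt_sq hT0).symm
    _ ≤ Real.sqrt (B^2) := Real.sqrt_le_sqrt hT2B
    _ = B := Real.sqrt_sq hB0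

lemma row_bound (N : ℕ) (P : Finset ℕ) (hP : ∀ q ∈ P, Nat.Prime q) (hPN : ∀ q ∈ P, q ≤ N)
    (p : ℕ) (hp : p.Prime) :
    ∑ q ∈ P, Real.exp (-(Real.log q - Real.log p)^2/2)
      * (Real.sqrt ((p:ℝ)/Real.log p) / Real.sqrt ((q:ℝ)/Real.log q))
    ≤ (Real.exp (25/8) * (1 + 5 * Real.log 4)) * ((p:ℝ)/Real.log p) := by
  set K := Real.exp (25/8) with hK
  have hK0 : 0 < K := Real.exp_pos _
  have hp2 : 2 ≤ p := hp.two_le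
  have hp0 : (0:ℝ) < p := by exact_mod_cast hp.pos
  have hlp : 0 < Real.log p := Real.log_pos (by exact_mod_cast hp.one_lt)
  have hl4 : 0 < Real.log 4 := Real.log_pos (by norm_num)
  set f : ℕ → ℝ := fun q => Real.exp (-(Real.log q - Real.log p)^2/2)
      * (Real.sqrt ((p:ℝ)/Real.log p) / Real.sqrt ((q:ℝ)/Real.log q)) with hf
  have hf0 : ∀ q, 0 ≤ f q := fun q => by positivity
  -- split
  rw [← Finset.sum_filter_add_sum_filter_not P (fun q => q * q ≤ p) f]
  rw [← Finset.sum_filter_add_sum_filter_not (P.filter (fun q => ¬ q * q ≤ p))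
    (fun q => q ≤ p) f]
  set A := P.filter (fun q => q * q ≤ p) with hA
  set B := (P.filter (fun q => ¬ q * q ≤ p)).filter (fun q => q ≤ p) with hB
  set C := (P.filter (fun q => ¬ q * q ≤ p)).filter (fun q => ¬ q ≤ p) with hC
  -- chunk A
  have hAbound : ∑ q ∈ A, f q ≤ K * ((p:ℝ)/Real.log p) := by
    have hterm : ∀ q ∈ A, f q ≤ K * (1/(p:ℝ)) := by
      intro q hq
      rw [hA, Finset.mem_filter] at hq
      have hqP := hP q hq.1
      have hq2 : 2 ≤ q := hqP.two_le
      have hqp : q ≤ p := le_trans (Nat.le_mul_of_pos_left q hqP.pos) hq.2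
      have h1 : f q ≤ K * ((q:ℝ)/p)^2 := term_le p q hp2 hq2 hqp
      have h2 : ((q:ℝ)/p)^2 ≤ 1/(p:ℝ) := by
        rw [div_pow, div_le_div_iff₀ (by positivity) hp0]
        have : ((q:ℝ)) * q ≤ p := by exact_mod_cast hq.2
        nlinarith
      calc f q ≤ K * ((q:ℝ)/p)^2 := h1
        _ ≤ K * (1/(p:ℝ)) := mul_le_mul_of_nonneg_left h2 hK0.le
    have hcard : (A.card : ℝ) ≤ p := by
      have hsub : A ⊆ Finset.Icc 1 p := by
        intro q hq
        rw [hA, Finset.mem_filter] at hq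
        have hqP := hP q hq.1
        rw [Finset.mem_Icc]
        exact ⟨hqP.one_lt.le, le_trans (Nat.le_mul_of_pos_left q hqP.pos) hq.2⟩
      have := Finset.card_le_card hsub
      rw [Nat.card_Icc] at this
      exact_mod_cast le_trans this (by omega)
    calc ∑ q ∈ A, f q ≤ ∑ _q ∈ A, K * (1/(p:ℝ)) := Finset.sum_le_sum hterm
      _ = (A.card : ℝ) * (K * (1/(p:ℝ))) := by rw [Finset.sum_const, nsmul_eq_mul]
      _ ≤ (p:ℝ) * (K * (1/(p:ℝ))) := mul_le_mul_of_nonneg_right hcard (by positivity)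
      _ = K := by field_simp
      _ ≤ K * ((p:ℝ)/Real.log p) := by
          nth_rewrite 1 [← mul_one K]
          apply mul_le_mul_of_nonneg_left _ hK0.le
          rw [le_div_iff₀ hlp, one_mul]
          have := Real.log_le_sub_one_of_pos hp0
          linarith
  -- chunk B
  have hBbound : ∑ q ∈ B, f q ≤ 2 * Real.log 4 * K * ((p:ℝ)/Real.log p) := by
    have hterm : ∀ q ∈ B, f q ≤ (2*K/Real.log p) * Real.log q := by
      intro q hq
      rw [hB, Finset.mem_filter, Finset.mem_filter] at hq
      have hqP := hP q hq.1.1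
      have hq2 : 2 ≤ q := hqP.two_le
      have hq0 : (0:ℝ) < q := by exact_mod_cast hqP.pos
      have hqp : q ≤ p := hq.2
      have hqpR : (q:ℝ) ≤ p := by exact_mod_cast hqp
      have hlq : 0 < Real.log q := Real.log_pos (by exact_mod_cast hqP.one_lt)
      have h1 : f q ≤ K * ((q:ℝ)/p)^2 := term_le p q hp2 hq2 hqp
      have hpq2 : (p:ℝ) ≤ (q:ℝ)*q := by
        have : p ≤ q * q := by omega
        exact_mod_cast this
      have hlp2 : Real.log p ≤ 2 * Real.log q := by
        calc Real.log p ≤ Real.log ((q:ℝ)*q) := Real.log_le_log hp0 hpq2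
          _ = 2 * Real.log q := by rw [Real.log_mul hq0.ne' hq0.ne']; ring
      have h2 : K * ((q:ℝ)/p)^2 ≤ (2*K/Real.log p) * Real.log q := by
        have e0 : ((q:ℝ)/p)^2 ≤ 1 := pow_le_one₀ (by positivity) (by rwa [div_le_one hp0])
        rw [div_mul_eq_mul_div, le_div_iff₀ hlp]
        nlinarith [mul_le_mul_of_nonneg_left hlp2 (mul_nonneg hK0.le (sq_nonneg ((q:ℝ)/p))),
          mul_le_mul_of_nonneg_right e0 (by positivity : (0:ℝ) ≤ 2*K*Real.log q)]
      exact h1.trans h2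
    have hsub : B ⊆ (Finset.range (p+1)).filter Nat.Prime := by
      intro q hq
      rw [hB, Finset.mem_filter, Finset.mem_filter] at hq
      rw [Finset.mem_filter, Finset.mem_range]
      exact ⟨by omega, hP q hq.1.1⟩
    have hsum : ∑ q ∈ B, Real.log q ≤ (p:ℝ) * Real.log 4 := by
      calc ∑ q ∈ B, Real.log q ≤ ∑ q ∈ (Finset.range (p+1)).filter Nat.Prime, Real.log q := by
            apply Finset.sum_le_sum_of_subset_of_nonneg hsub
            intro q hq _
            rw [Finset.mem_filter] at hq
            exact Real.log_nonneg (by exact_mod_cast hq.2.one_lt.le)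
        _ ≤ (p:ℝ) * Real.log 4 := theta_le p
    calc ∑ q ∈ B, f q ≤ ∑ q ∈ B, (2*K/Real.log p) * Real.log q := Finset.sum_le_sum hterm
      _ = (2*K/Real.log p) * ∑ q ∈ B, Real.log q := by rw [Finset.mul_sum]
      _ ≤ (2*K/Real.log p) * ((p:ℝ) * Real.log 4) := by
          apply mul_le_mul_of_nonneg_left hsum (by positivity)
      _ = 2 * Real.log 4 * K * ((p:ℝ)/Real.log p) := by field_simp
  -- chunk C
  have hCbound : ∑ q ∈ C, f q ≤ 3 * Real.log 4 * K * ((p:ℝ)/Real.log p) := by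
    set g : ℕ → ℝ := fun j => ((p:ℝ)/(max j p))^2 with hg
    have hterm : ∀ q ∈ C, f q ≤ (K/Real.log p) * (g q * Real.log q) := by
      intro q hq
      rw [hC, Finset.mem_filter, Finset.mem_filter] at hq
      have hqP := hP q hq.1.1
      have hq2 : 2 ≤ q := hqP.two_le
      have hpq : p ≤ q := by omega
      have h1 : f q ≤ K * (((p:ℝ)/q)^2 * (Real.log q / Real.log p)) := term_ge p q hp2 hq2 hpq
      have hlq : 0 < Real.log q := Real.log_pos (by exact_mod_cast hqP.one_lt)
      have hmax : (max q p) = q := max_eq_left hpq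
      have hgq : g q = ((p:ℝ)/q)^2 := by rw [hg]; simp only [hmax]
      rw [hgq]
      calc f q ≤ K * (((p:ℝ)/q)^2 * (Real.log q / Real.log p)) := h1
        _ = (K/Real.log p) * (((p:ℝ)/q)^2 * Real.log q) := by field_simp
    have hgmono : ∀ j, g (j+1) ≤ g j := by
      intro j
      have h1 : ((max j p : ℕ):ℝ) ≤ ((max (j+1) p : ℕ):ℝ) := by
        exact_mod_cast max_le_max (Nat.le_succ j) (le_refl p)
      have h2 : (0:ℝ) < ((max j p : ℕ):ℝ) := by
        exact_mod_cast lt_of_lt_of_le hp.pos (le_max_right j p)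
      exact pow_le_pow_left₀ (by positivity) (div_le_div_of_nonneg_left hp0.le h2 h1) 2
    have hg0 : ∀ j, 0 ≤ g j := fun j => by positivity
    have hsubC : C ⊆ (Finset.range (N+1)).filter Nat.Prime := by
      intro q hq
      rw [hC, Finset.mem_filter, Finset.mem_filter] at hq
      rw [Finset.mem_filter, Finset.mem_range]
      have := hPN q hq.1.1
      exact ⟨by omega, hP q hq.1.1⟩
    calc ∑ q ∈ C, f q ≤ ∑ q ∈ C, (K/Real.log p) * (g q * Real.log q) :=
          Finset.sum_le_sum hterm
      _ = (K/Real.log p) * ∑ q ∈ C, g q * Real.log q := by rw [Finset.mul_sum]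
      _ ≤ (K/Real.log p) * ∑ q ∈ (Finset.range (N+1)).filter Nat.Prime, g q * Real.log q := by
          apply mul_le_mul_of_nonneg_left _ (by positivity)
          apply Finset.sum_le_sum_of_subset_of_nonneg hsubC
          intro q hq _
          rw [Finset.mem_filter] at hq
          exact mul_nonneg (hg0 q) (Real.log_nonneg (by exact_mod_cast hq.2.one_lt.le))
      _ ≤ (K/Real.log p) * (Real.log 4 * ∑ j ∈ Finset.range (N+1), g j) := by
          apply mul_le_mul_of_nonneg_left (abel_theta g hgmono hg0 N) (by positivity)
      _ ≤ (K/Real.log p) * (Real.log 4 * (3*p)) := by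
          apply mul_le_mul_of_nonneg_left _ (by positivity)
          exact mul_le_mul_of_nonneg_left (sum_g_le p N hp.one_lt.le) hl4.le
      _ = 3 * Real.log 4 * K * ((p:ℝ)/Real.log p) := by field_simp
  have expand : (K * (1 + 5*Real.log 4)) * ((p:ℝ)/Real.log p)
      = K * ((p:ℝ)/Real.log p) + 2*Real.log 4*K*((p:ℝ)/Real.log p)
        + 3*Real.log 4*K*((p:ℝ)/Real.log p) := by ring
  rw [expand]
  linarith [hAbound, hBbound, hCbound]

lemma amgm (a b s : ℝ) (hs : 0 < s) : a * b ≤ (s*a^2 + b^2/s)/2 := by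
  have key : 2*s*(a*b) ≤ s*(s*a^2) + b^2 := by nlinarith [sq_nonneg (s*a-b)]
  have h2s : 0 < 2*s := by linarith
  have heq : (s*a^2 + b^2/s)/2 = (s*(s*a^2)+b^2)/(2*s) := by field_simp
  rw [heq, le_div_iff₀ h2s]
  nlinarith [key]

lemma bilinear (N : ℕ) (P : Finset ℕ) (hP : ∀ q ∈ P, Nat.Prime q) (hPN : ∀ q ∈ P, q ≤ N)
    (y : ℕ → ℝ) :
    ∑ p ∈ P, ∑ q ∈ P, y p * y q * Real.exp (-(Real.log q - Real.log p)^2/2)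
      ≤ (Real.exp (25/8) * (1 + 5 * Real.log 4)) * ∑ p ∈ P, (y p)^2 * ((p:ℝ)/Real.log p) := by
  set v : ℕ → ℝ := fun r => Real.sqrt ((r:ℝ)/Real.log r) with hv
  have hvpos : ∀ r ∈ P, 0 < v r := by
    intro r hr
    have hrP := hP r hr
    have h1 : (0:ℝ) < r := by exact_mod_cast hrP.pos
    have h2 : 0 < Real.log r := Real.log_pos (by exact_mod_cast hrP.one_lt)
    rw [hv]
    positivity
  have step1 : ∑ p ∈ P, ∑ q ∈ P, y p * y q * Real.exp (-(Real.log q - Real.log p)^2/2)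
      ≤ ∑ p ∈ P, ∑ q ∈ P,
        ((v p / v q * (y p)^2 + (y q)^2/(v p / v q))/2)
          * Real.exp (-(Real.log q - Real.log p)^2/2) := by
    apply Finset.sum_le_sum
    intro p hp
    apply Finset.sum_le_sum
    intro q hq
    have hs : 0 < v p / v q := div_pos (hvpos p hp) (hvpos q hq)
    have := amgm (y p) (y q) (v p / v q) hs
    apply mul_le_mul_of_nonneg_right this (Real.exp_nonneg _)
  have step2 : ∑ p ∈ P, ∑ q ∈ P,
        ((v p / v q * (y p)^2 + (y q)^2/(v p / v q))/2)
          * Real.exp (-(Real.log q - Real.log p)^2/2)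
      = ∑ p ∈ P, (y p)^2 * ∑ q ∈ P, Real.exp (-(Real.log q - Real.log p)^2/2) * (v p / v q) := by
    have exp_sym : ∀ p q : ℕ, Real.exp (-(Real.log q - Real.log p)^2/2)
        = Real.exp (-(Real.log p - Real.log q)^2/2) := by
      intro p q
      congr 1
      ring
    have split : ∀ p ∈ P, ∀ q ∈ P,
        ((v p / v q * (y p)^2 + (y q)^2/(v p / v q))/2)
          * Real.exp (-(Real.log q - Real.log p)^2/2)
        = (1/2) * ((y p)^2 * (Real.exp (-(Real.log q - Real.log p)^2/2) * (v p / v q)))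
          + (1/2) * ((y q)^2 * (Real.exp (-(Real.log q - Real.log p)^2/2) * (v q / v p))) := by
      intro p hp q hq
      have hvp := hvpos p hp
      have hvq := hvpos q hq
      field_simp
    rw [Finset.sum_congr rfl (fun p hp => Finset.sum_congr rfl (fun q hq => split p hp q hq))]
    rw [Finset.sum_congr rfl (fun p (hp : p ∈ P) => Finset.sum_add_distrib)]
    rw [Finset.sum_add_distrib]
    have swap : ∑ p ∈ P, ∑ q ∈ P,
        (1/2) * ((y q)^2 * (Real.exp (-(Real.log q - Real.log p)^2/2) * (v q / v p)))
        = ∑ p ∈ P, ∑ q ∈ P,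
        (1/2) * ((y p)^2 * (Real.exp (-(Real.log q - Real.log p)^2/2) * (v p / v q))) := by
      rw [Finset.sum_comm]
      apply Finset.sum_congr rfl
      intro p hp
      apply Finset.sum_congr rfl
      intro q hq
      rw [exp_sym]
    rw [swap, ← Finset.sum_add_distrib]
    apply Finset.sum_congr rfl
    intro p hp
    rw [← Finset.sum_add_distrib, Finset.mul_sum]
    apply Finset.sum_congr rfl
    intro q hq
    ring
  have step3 : ∑ p ∈ P, (y p)^2 * ∑ q ∈ P, Real.exp (-(Real.log q - Real.log p)^2/2) * (v p / v q)
      ≤ ∑ p ∈ P, (y p)^2 * ((Real.exp (25/8) * (1 + 5 * Real.log 4)) * ((p:ℝ)/Real.log p)) := by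
    apply Finset.sum_le_sum
    intro p hp
    apply mul_le_mul_of_nonneg_left _ (sq_nonneg _)
    have := row_bound N P hP hPN p (hP p hp)
    simpa [hv, Real.sqrt_div_self'] using this
  calc ∑ p ∈ P, ∑ q ∈ P, y p * y q * Real.exp (-(Real.log q - Real.log p)^2/2)
      ≤ _ := step1
    _ = _ := step2
    _ ≤ _ := step3
    _ = (Real.exp (25/8) * (1 + 5 * Real.log 4)) * ∑ p ∈ P, (y p)^2 * ((p:ℝ)/Real.log p) := by
        rw [Finset.mul_sum]
        apply Finset.sum_congr rfl
        intro p hp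
        ring

theorem stmt5 :
    ∃ C : ℝ, 0 < C ∧ ∀ a : ℕ → ℂ, ∀ x : ℝ, 3 ≤ x →
      (∫ t in (-1 : ℝ)..1, (‖(∑ p ∈ (Finset.Icc 1 ⌊x⌋₊).filter
            (fun p : ℕ => p.Prime ∧ (Real.log x) ^ 4 ≤ (p : ℝ)),
          a p * (Real.log p : ℂ) / (p : ℂ) ^ (1 + (t : ℂ) * Complex.I))‖) ^ 2)
      ≤ C * ∑ p ∈ (Finset.Icc 1 ⌊x⌋₊).filter
            (fun p : ℕ => p.Prime ∧ (Real.log x) ^ 4 ≤ (p : ℝ)),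
          ‖a p‖ ^ 2 * Real.log p / p := by
  have hl4 : 0 < Real.log 4 := Real.log_pos (by norm_num)
  set Crow : ℝ := Real.exp (25/8) * (1 + 5 * Real.log 4) with hCrow
  have hCrow0 : 0 < Crow := mul_pos (Real.exp_pos _) (by linarith)
  refine ⟨Real.exp (1/2) * (Real.sqrt (2*Real.pi) * Crow), by positivity, ?_⟩
  intro a x hx
  set N := ⌊x⌋₊ with hN
  set P := (Finset.Icc 1 N).filter (fun p : ℕ => p.Prime ∧ (Real.log x)^4 ≤ (p:ℝ)) with hPdef
  have hP : ∀ q ∈ P, Nat.Prime q := fun q hq => (Finset.mem_filter.mp hq).2.1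
  have hPN : ∀ q ∈ P, q ≤ N := fun q hq => (Finset.mem_Icc.mp (Finset.mem_filter.mp hq).1).2
  set b : ℕ → ℂ := fun p => a p * (Real.log p : ℂ) / (p:ℂ) with hb
  set D : ℝ → ℂ := fun t => ∑ p ∈ P, b p * Complex.exp (((-(Real.log p * t) : ℝ) : ℂ) * Complex.I) with hD
  have hp0R : ∀ p ∈ P, (0:ℝ) < p := fun p hp => by exact_mod_cast (hP p hp).pos
  -- rewriting the Dirichlet polynomial
  have hDeq : ∀ t : ℝ, (∑ p ∈ P,
      a p * (Real.log p : ℂ) / (p : ℂ) ^ (1 + (t:ℂ) * Complex.I)) = D t := by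
    intro t
    rw [hD]
    apply Finset.sum_congr rfl
    intro p hp
    have hppos : (0:ℝ) < p := hp0R p hp
    have hpC : (p:ℂ) ≠ 0 := by exact_mod_cast hppos.ne'
    have hlog : Complex.log (p:ℂ) = ((Real.log p : ℝ) : ℂ) := by
      rw [show ((p:ℕ):ℂ) = (((p:ℕ):ℝ):ℂ) by push_cast; rfl, ← Complex.ofReal_log hppos.le]
    rw [Complex.cpow_def_of_ne_zero hpC, hlog]
    have hexp : Complex.exp (((Real.log p : ℝ) : ℂ) * (1 + (t:ℂ) * Complex.I))
        = (p:ℂ) * Complex.exp (-(((-(Real.log p * t) : ℝ) : ℂ) * Complex.I)) := by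
      have h1 : ((Real.log p : ℝ) : ℂ) * (1 + (t:ℂ) * Complex.I)
          = ((Real.log p : ℝ) : ℂ) + (-(((-(Real.log p * t) : ℝ) : ℂ) * Complex.I)) := by
        push_cast
        ring
      rw [h1, Complex.exp_add]
      congr 1
      rw [← Complex.ofReal_exp, Real.exp_log hppos]
      push_cast
      rfl
    rw [hexp, Complex.exp_neg, hb]
    have hne := Complex.exp_ne_zero (((-(Real.log p * t) : ℝ) : ℂ) * Complex.I)
    field_simp
  have hDcont : Continuous D := by
    rw [hD]
    apply continuous_finset_sum
    intro p _
    apply Continuous.mul continuous_const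
    apply Complex.continuous_exp.comp
    exact (Complex.continuous_ofReal.comp
      ((continuous_const.mul continuous_id).neg)).mul continuous_const
  set f : ℝ → ℝ := fun t => Real.exp (-(1/2) * t^2) * (‖(D t)‖)^2 with hfdef
  have hfcont : Continuous f := by
    apply Continuous.mul
    · exact Real.continuous_exp.comp (continuous_const.mul (continuous_pow 2))
    · exact (continuous_norm.comp hDcont).pow 2
  have hf0 : ∀ t, 0 ≤ f t :=
    fun t => mul_nonneg (Real.exp_nonneg _) (pow_nonneg (norm_nonneg _) 2)
  set M : ℝ := ∑ p ∈ P, ‖(b p)‖ with hM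
  have hDle : ∀ t, ‖(D t)‖ ≤ M := by
    intro t
    rw [hD, hM]
    refine le_trans (norm_sum_le _ _) (le_of_eq ?_)
    apply Finset.sum_congr rfl
    intro p _
    rw [norm_mul, Complex.norm_exp_ofReal_mul_I, mul_one]
  have hfInt : Integrable f := by
    apply Integrable.mono'
      ((integrable_exp_neg_mul_sq (by norm_num : (0:ℝ) < 1/2)).const_mul (M^2))
      hfcont.aestronglyMeasurable
    filter_upwards with t
    rw [Real.norm_of_nonneg (hf0 t), hfdef]
    simp only
    have h1 : (‖(D t)‖)^2 ≤ M^2 :=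
      pow_le_pow_left₀ (norm_nonneg _) (hDle t) 2
    nlinarith [Real.exp_nonneg (-(1/2)*t^2), Real.exp_pos (-(1/2)*t^2)]
  have stepA : (∫ t in (-1:ℝ)..1, (‖(D t)‖)^2)
      ≤ Real.exp (1/2) * ∫ t in (-1:ℝ)..1, f t := by
    rw [← intervalIntegral.integral_const_mul]
    apply intervalIntegral.integral_mono_on (by norm_num : (-1:ℝ) ≤ 1)
    · exact ((continuous_norm.comp hDcont).pow 2).intervalIntegrable _ _
    · exact (continuous_const.mul hfcont).intervalIntegrable _ _
    · intro t ht
      rw [Set.mem_Icc] at ht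
      have h1 : (1:ℝ) ≤ Real.exp (1/2) * Real.exp (-(1/2)*t^2) := by
        rw [← Real.exp_add]
        have h0 : (0:ℝ) ≤ 1/2 + -(1/2)*t^2 := by nlinarith [ht.1, ht.2]
        calc (1:ℝ) = Real.exp 0 := Real.exp_zero.symm
          _ ≤ _ := Real.exp_le_exp.mpr h0
      calc (‖(D t)‖)^2 = 1 * (‖(D t)‖)^2 := (one_mul _).symm
        _ ≤ (Real.exp (1/2) * Real.exp (-(1/2)*t^2)) * (‖(D t)‖)^2 :=
            mul_le_mul_of_nonneg_right h1 (pow_nonneg (norm_nonneg _) 2)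
        _ = Real.exp (1/2) * f t := by rw [hfdef]; ring
  have stepB : (∫ t in (-1:ℝ)..1, f t) ≤ ∫ t : ℝ, f t := by
    rw [intervalIntegral.integral_of_le (by norm_num : (-1:ℝ) ≤ (1:ℝ))]
    exact setIntegral_le_integral hfInt (Filter.Eventually.of_forall hf0)
  set c : ℕ → ℕ → ℂ := fun p q => Complex.I * (((Real.log q - Real.log p : ℝ)):ℂ) with hc
  set g : ℕ → ℕ → ℝ → ℂ :=
    fun p q t => Complex.exp ((-(1/2):ℂ) * (t:ℂ)^2 + c p q * (t:ℂ) + 0) with hg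
  set w : ℕ → ℕ → ℝ :=
    fun p q => Real.sqrt (2*Real.pi) * Real.exp (-(Real.log q - Real.log p)^2/2) with hw
  have hw0 : ∀ p q, 0 ≤ w p q := fun p q => by
    rw [hw]; positivity
  have hgInt : ∀ p q : ℕ, Integrable (g p q) := by
    intro p q
    have h := integrable_cexp_quadratic' (show ((-(1/2):ℂ)).re < 0 by simp)
      (c p q) 0
    exact h
  have hFt : ∀ t : ℝ, ((f t : ℝ) : ℂ)
      = ∑ p ∈ P, ∑ q ∈ P, (b p * (starRingEnd ℂ) (b q)) * g p q t := by
    intro t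
    have h1 : ((f t : ℝ) : ℂ)
        = Complex.exp (((-(1/2)*t^2 : ℝ)) : ℂ) * (D t * (starRingEnd ℂ) (D t)) := by
      rw [hfdef]
      simp only
      rw [Complex.ofReal_mul, Complex.ofReal_exp]
      congr 1
      rw [Complex.mul_conj]
      norm_cast
      exact Complex.sq_norm (D t)
    rw [h1, hD]
    simp only
    rw [map_sum, Finset.sum_mul_sum, Finset.mul_sum]
    apply Finset.sum_congr rfl; intro p _
    rw [Finset.mul_sum]
    apply Finset.sum_congr rfl; intro q _
    rw [map_mul, ← Complex.exp_conj]
    have hconj : (starRingEnd ℂ) ((↑(-(Real.log q * t)) : ℂ) * Complex.I)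
        = (↑(-(Real.log q * t)) : ℂ) * (-Complex.I) := by
      rw [map_mul, Complex.conj_ofReal, Complex.conj_I]
    rw [hconj]
    have hE : (-(1/2):ℂ) * (t:ℂ)^2 + c p q * (t:ℂ) + 0
        = ((-(1/2)*t^2 : ℝ) : ℂ) + ((↑(-(Real.log p * t)) : ℂ) * Complex.I
            + (↑(-(Real.log q * t)) : ℂ) * (-Complex.I)) := by
      rw [hc]
      push_cast
      ring
    rw [hg]
    simp only
    rw [hE, Complex.exp_add, Complex.exp_add]
    ring
  have hgval : ∀ p q : ℕ, (∫ t : ℝ, g p q t) = ((w p q : ℝ) : ℂ) := by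
    intro p q
    rw [hg]
    simp only
    rw [integral_cexp_quadratic (show ((-(1/2):ℂ)).re < 0 by simp) (c p q) 0]
    have h2 : (↑Real.pi / -(-(1/2)) : ℂ) = (((2*Real.pi : ℝ)) : ℂ) := by
      push_cast
      ring
    have h3 : ((0:ℂ) - (c p q)^2/(4 * (-(1/2))))
        = ((-(Real.log q - Real.log p)^2/2 : ℝ) : ℂ) := by
      rw [hc, mul_pow, Complex.I_sq]
      push_cast
      ring
    rw [h2, h3]
    have h4 : (((2*Real.pi : ℝ)) : ℂ) ^ ((1:ℂ)/2) = ((Real.sqrt (2*Real.pi) : ℝ) : ℂ) := by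
      rw [show ((1:ℂ)/2) = (((1/2 : ℝ)) : ℂ) by norm_num]
      rw [← Complex.ofReal_cpow (by positivity)]
      rw [show ((2*Real.pi)^((1:ℝ)/2) : ℝ) = Real.sqrt (2*Real.pi) by
        rw [Real.sqrt_eq_rpow]]
    rw [h4, ← Complex.ofReal_exp, ← Complex.ofReal_mul]
  have hfval : (∫ t : ℝ, f t)
      = ∑ p ∈ P, ∑ q ∈ P, ((b p * (starRingEnd ℂ) (b q)) * ((w p q : ℝ) : ℂ)).re := by
    have hC : ((∫ t : ℝ, f t : ℝ) : ℂ)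
        = ∑ p ∈ P, ∑ q ∈ P, ((b p * (starRingEnd ℂ) (b q)) * ((w p q : ℝ) : ℂ)) := by
      rw [show ((∫ t : ℝ, f t : ℝ) : ℂ) = ∫ t : ℝ, ((f t : ℝ) : ℂ) from
        (integral_ofReal (𝕜 := ℂ)).symm]
      calc (∫ t : ℝ, ((f t : ℝ):ℂ))
          = ∫ t : ℝ, ∑ p ∈ P, ∑ q ∈ P, (b p * (starRingEnd ℂ) (b q)) * g p q t := by
            apply integral_congr_ae
            filter_upwards with t
            exact hFt t
        _ = ∑ p ∈ P, ∫ t : ℝ, ∑ q ∈ P, (b p * (starRingEnd ℂ) (b q)) * g p q t := by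
            apply integral_finset_sum
            intro p _
            apply integrable_finset_sum
            intro q _
            exact (hgInt p q).const_mul _
        _ = ∑ p ∈ P, ∑ q ∈ P, ∫ t : ℝ, (b p * (starRingEnd ℂ) (b q)) * g p q t := by
            apply Finset.sum_congr rfl
            intro p _
            apply integral_finset_sum
            intro q _
            exact (hgInt p q).const_mul _
        _ = ∑ p ∈ P, ∑ q ∈ P, ((b p * (starRingEnd ℂ) (b q)) * ((w p q : ℝ) : ℂ)) := by
            apply Finset.sum_congr rfl; intro p _
            apply Finset.sum_congr rfl; intro q _
            rw [MeasureTheory.integral_const_mul, hgval]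
    have := congrArg Complex.re hC
    rw [Complex.ofReal_re] at this
    rw [this]
    rw [Complex.re_sum]
    apply Finset.sum_congr rfl; intro p _
    rw [Complex.re_sum]
  have hw_bound : (∫ t : ℝ, f t)
      ≤ Real.sqrt (2*Real.pi) * ∑ p ∈ P, ∑ q ∈ P,
          ‖(b p)‖ * ‖(b q)‖
            * Real.exp (-(Real.log q - Real.log p)^2/2) := by
    rw [hfval, Finset.mul_sum]
    apply Finset.sum_le_sum
    intro p _
    rw [Finset.mul_sum]
    apply Finset.sum_le_sum
    intro q _
    have h1 : ((b p * (starRingEnd ℂ) (b q)) * ((w p q : ℝ) : ℂ)).re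
        = (b p * (starRingEnd ℂ) (b q)).re * w p q := by
      simp [Complex.mul_re]
    rw [h1]
    have h2 : (b p * (starRingEnd ℂ) (b q)).re ≤ ‖(b p)‖ * ‖(b q)‖ := by
      calc (b p * (starRingEnd ℂ) (b q)).re ≤ ‖(b p * (starRingEnd ℂ) (b q))‖ :=
            Complex.re_le_norm _
        _ = ‖(b p)‖ * ‖(b q)‖ := by
            rw [norm_mul, Complex.norm_conj]
    calc (b p * (starRingEnd ℂ) (b q)).re * w p q
        ≤ (‖(b p)‖ * ‖(b q)‖) * w p q :=
          mul_le_mul_of_nonneg_right h2 (hw0 p q)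
      _ = Real.sqrt (2*Real.pi) * (‖(b p)‖ * ‖(b q)‖
            * Real.exp (-(Real.log q - Real.log p)^2/2)) := by
          rw [hw]
          ring
  have hbil := bilinear N P hP hPN (fun p => ‖(b p)‖)
  have hconv : ∑ p ∈ P, (‖(b p)‖)^2 * ((p:ℝ)/Real.log p)
      = ∑ p ∈ P, (‖(a p)‖)^2 * Real.log p / p := by
    apply Finset.sum_congr rfl
    intro p hp
    have hppos := hp0R p hp
    have hlp : 0 < Real.log p := Real.log_pos (by exact_mod_cast (hP p hp).one_lt)
    rw [hb]
    simp only
    rw [norm_div, norm_mul, Complex.norm_real, Complex.norm_natCast, Real.norm_of_nonneg hlp.le]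
    field_simp
  calc (∫ t in (-1:ℝ)..1, (‖(∑ p ∈ P, a p * (Real.log p : ℂ) / (p : ℂ) ^ (1 + (t:ℂ) * Complex.I))‖)^2)
      = ∫ t in (-1:ℝ)..1, (‖(D t)‖)^2 := by
        apply intervalIntegral.integral_congr
        intro t _
        exact congrArg (fun z => ‖z‖ ^ 2) (hDeq t)
    _ ≤ Real.exp (1/2) * ∫ t in (-1:ℝ)..1, f t := stepA
    _ ≤ Real.exp (1/2) * ∫ t : ℝ, f t :=
        mul_le_mul_of_nonneg_left stepB (Real.exp_nonneg _)
    _ ≤ Real.exp (1/2) * (Real.sqrt (2*Real.pi) * ∑ p ∈ P, ∑ q ∈ P,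
          ‖(b p)‖ * ‖(b q)‖
            * Real.exp (-(Real.log q - Real.log p)^2/2)) :=
        mul_le_mul_of_nonneg_left hw_bound (Real.exp_nonneg _)
    _ ≤ Real.exp (1/2) * (Real.sqrt (2*Real.pi)
          * (Crow * ∑ p ∈ P, (‖(b p)‖)^2 * ((p:ℝ)/Real.log p))) := by
        apply mul_le_mul_of_nonneg_left _ (Real.exp_nonneg _)
        apply mul_le_mul_of_nonneg_left _ (Real.sqrt_nonneg _)
        exact hbil
    _ = Real.exp (1/2) * (Real.sqrt (2*Real.pi) * Crow)
          * ∑ p ∈ P, (‖(a p)‖)^2 * Real.log p / p := by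
        rw [hconv]
        ring
end
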